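/- Let p be an odd prime, φ the quadratic character of F_p, and n ≥ 1 with p ∤ 3n(3n-2). For any x ∈ F_p^× and α as below, Σ_{χ} g(χ^{3n})·g(φχ̄)·g(χ̄)·g(χ̄^{3n-2})·χ(α) = g(φ)·[ p·Σ_{χ} J(χ^{3n}, χ̄^{3n-2})·χ(4α) − (p-1)²·(1 + φ(α)·δ(φⁿ)) ], where both sums run over all multiplicative characters χ of F_p. -/
import Mathlib


open Finset
open scoped Classical

noncomputable def gsum (p : ℕ) [Fact p.Prime] (ζ : ℂ) (χ : MulChar (ZMod p) ℂ) : ℂ :=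
  ∑ x : ZMod p, χ x * ζ ^ x.val

section Aux

variable {p : ℕ} [Fact p.Prime]

private lemma aux_p_ne_two (hp : Odd p) : p ≠ 2 := by
  rintro rfl; simp [Nat.odd_iff] at hp

private lemma aux_two_ne_zero (hp : Odd p) : (2 : ZMod p) ≠ 0 := by
  have : ((2 : ℕ) : ZMod p) ≠ 0 := by
    rw [Ne, ZMod.natCast_eq_zero_iff]
    intro h
    exact aux_p_ne_two hp ((Nat.prime_dvd_prime_iff_eq Fact.out Nat.prime_two).mp h)
  simpa using this

private lemma aux_four_ne_zero (hp : Odd p) : (4 : ZMod p) ≠ 0 := by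
  have : (4 : ZMod p) = 2 * 2 := by norm_num
  rw [this]
  exact mul_ne_zero (aux_two_ne_zero hp) (aux_two_ne_zero hp)

private lemma aux_ringChar (hp : Odd p) : ringChar (ZMod p) ≠ 2 := by
  rw [ZMod.ringChar_zmod_n]; exact aux_p_ne_two hp

private lemma aux_phi_ne_one (hp : Odd p) :
    (quadraticChar (ZMod p)).ringHomComp (Int.castRingHom ℂ) ≠ 1 := by
  have h := quadraticChar_ne_one (aux_ringChar hp)
  intro hc
  exact h ((MulChar.ringHomComp_eq_one_iff (f := Int.castRingHom ℂ)
    Int.cast_injective).mp hc)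

private lemma aux_phi_quadratic :
    ((quadraticChar (ZMod p)).ringHomComp (Int.castRingHom ℂ)).IsQuadratic :=
  (quadraticChar_isQuadratic (ZMod p)).comp _

end Aux


section Aux2

variable {p : ℕ} [Fact p.Prime]

private lemma aux_phi_val_one {a : ZMod p} (ha : a ≠ 0) (hs : IsSquare a) :
    ((quadraticChar (ZMod p)).ringHomComp (Int.castRingHom ℂ)) a = 1 := by
  rw [MulChar.ringHomComp_apply, (quadraticChar_one_iff_isSquare ha).mpr hs]
  simp

private lemma aux_phi_val_neg_one {a : ZMod p} (hs : ¬ IsSquare a) :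
    ((quadraticChar (ZMod p)).ringHomComp (Int.castRingHom ℂ)) a = -1 := by
  rw [MulChar.ringHomComp_apply, quadraticChar_neg_one_iff_not_isSquare.mpr hs]
  simp

/-- A character of order dividing 2 that is not trivial is the quadratic character. -/
private lemma aux_sq_classify (hp : Odd p) {χ : MulChar (ZMod p) ℂ}
    (h1 : χ ≠ 1) (h2 : χ ^ 2 = 1) :
    χ = (quadraticChar (ZMod p)).ringHomComp (Int.castRingHom ℂ) := by
  have hval : ∀ a : ZMod p, a ≠ 0 → χ a = 1 ∨ χ a = -1 := by
    intro a ha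
    have : χ a * χ a = 1 := by
      have h' : (χ ^ 2) a = 1 := by rw [h2]; exact MulChar.one_apply (isUnit_iff_ne_zero.mpr ha)
      rwa [sq, MulChar.coeToFun_mul, Pi.mul_apply] at h'
    exact mul_self_eq_one_iff.mp this
  have hsq : ∀ a : ZMod p, IsSquare a → a ≠ 0 → χ a = 1 := by
    rintro a ⟨b, rfl⟩ ha
    have hb : b ≠ 0 := by rintro rfl; simp at ha
    have h' : (χ ^ 2) b = 1 := by rw [h2]; exact MulChar.one_apply (isUnit_iff_ne_zero.mpr hb)
    rwa [sq, MulChar.coeToFun_mul, Pi.mul_apply, ← map_mul] at h'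
  apply MulChar.ext
  intro u
  have hu : (u : ZMod p) ≠ 0 := u.ne_zero
  by_cases hs : IsSquare ((u : Units (ZMod p)) : ZMod p)
  · rw [hsq u hs hu, aux_phi_val_one hu hs]
  · rw [aux_phi_val_neg_one hs]
    rcases hval u hu with h | h
    · exfalso
      apply h1
      rw [MulChar.eq_one_iff]
      intro v
      have hv : (v : ZMod p) ≠ 0 := v.ne_zero
      by_cases hvs : IsSquare ((v : Units (ZMod p)) : ZMod p)
      · exact hsq v hvs hv
      · have hsq2 : IsSquare (((u : ZMod p))⁻¹ * v) := by
          rw [← quadraticChar_one_iff_isSquare (mul_ne_zero (inv_ne_zero hu) hv)]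
          rw [map_mul]
          have h1' : quadraticChar (ZMod p) ((u : ZMod p))⁻¹ = -1 := by
            rw [← MulChar.inv_apply', (quadraticChar_isQuadratic (ZMod p)).inv]
            exact quadraticChar_neg_one_iff_not_isSquare.mpr hs
          rw [h1', quadraticChar_neg_one_iff_not_isSquare.mpr hvs]
          ring
        have heq : (v : ZMod p) = u * (((u : ZMod p))⁻¹ * v) := by
          field_simp
        rw [heq, map_mul, h, hsq _ hsq2 (mul_ne_zero (inv_ne_zero hu) hv), one_mul]
    · exact h

end Aux2

section Aux3

variable {p : ℕ} [Fact p.Prime]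

private lemma aux_gaussSum_one {ψ : AddChar (ZMod p) ℂ} (hψ : ψ.IsPrimitive) :
    gaussSum (1 : MulChar (ZMod p) ℂ) ψ = -1 := by
  have hψ0 : ψ ≠ 0 := by
    have h1 : ψ ≠ 1 := by
      have := hψ (one_ne_zero : (1 : ZMod p) ≠ 0)
      rwa [AddChar.mulShift_one] at this
    rw [AddChar.ne_zero_iff]
    exact AddChar.ne_one_iff.mp h1
  have key : ∀ a : ZMod p, (1 : MulChar (ZMod p) ℂ) a * ψ a
      = ψ a - (if a = 0 then 1 else 0) := by
    intro a
    rcases eq_or_ne a 0 with rfl | h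
    · simp [MulChar.map_zero]
    · simp [MulChar.one_apply (isUnit_iff_ne_zero.mpr h), h]
  rw [gaussSum, Finset.sum_congr rfl fun a _ => key a, Finset.sum_sub_distrib,
    AddChar.sum_eq_zero_iff_ne_zero.mpr hψ0, Finset.sum_ite_eq' Finset.univ (0 : ZMod p)
      (fun _ => (1 : ℂ))]
  simp

/-- The key counting identity: `J(χ,φ) = χ(4)·J(χ,χ)` for nontrivial `χ`. -/
private lemma aux_jacobi_quad (hp : Odd p) {χ : MulChar (ZMod p) ℂ} (h1 : χ ≠ 1) :
    jacobiSum χ ((quadraticChar (ZMod p)).ringHomComp (Int.castRingHom ℂ))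
      = χ 4 * jacobiSum χ χ := by
  set φ := (quadraticChar (ZMod p)).ringHomComp (Int.castRingHom ℂ) with hφdef
  have hcard : ∀ s : ZMod p, φ s = (∑ u : ZMod p, if u ^ 2 = s then (1 : ℂ) else 0) - 1 := by
    intro s
    have h := quadraticChar_card_sqrts (aux_ringChar hp) s
    have h2 : (∑ u : ZMod p, if u ^ 2 = s then (1 : ℂ) else 0)
        = (#{x : ZMod p | x ^ 2 = s}.toFinset : ℂ) := by
      rw [Finset.sum_boole, Set.toFinset_setOf]
    rw [h2]
    have h3 : ((#{x : ZMod p | x ^ 2 = s}.toFinset : ℕ) : ℂ)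
        = ((quadraticChar (ZMod p) s : ℤ) : ℂ) + 1 := by
      exact_mod_cast congrArg (Int.cast : ℤ → ℂ) h
    rw [h3, hφdef, MulChar.ringHomComp_apply, eq_intCast]
    ring
  have step1 : jacobiSum χ φ = ∑ u : ZMod p, χ (1 - u ^ 2) := by
    rw [jacobiSum]
    calc ∑ x : ZMod p, χ x * φ (1 - x)
        = ∑ x : ZMod p, ((∑ u : ZMod p, if u ^ 2 = 1 - x then χ x else 0) - χ x) := by
          refine Finset.sum_congr rfl fun x _ => ?_
          rw [hcard (1 - x), mul_sub, mul_one, Finset.mul_sum]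
          simp [mul_ite, mul_comm]
      _ = (∑ x : ZMod p, ∑ u : ZMod p, if u ^ 2 = 1 - x then χ x else 0) - ∑ x : ZMod p, χ x :=
          by rw [Finset.sum_sub_distrib]
      _ = ∑ u : ZMod p, ∑ x : ZMod p, if x = 1 - u ^ 2 then χ x else 0 := by
          rw [MulChar.sum_eq_zero_of_ne_one h1, sub_zero, Finset.sum_comm]
          refine Finset.sum_congr rfl fun u _ => Finset.sum_congr rfl fun x _ => ?_
          congr 1
          simp only [eq_iff_iff]
          constructor
          · intro h; rw [h]; ring
          · intro h; rw [h]; ring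
      _ = ∑ u : ZMod p, χ (1 - u ^ 2) := by
          refine Finset.sum_congr rfl fun u _ => ?_
          rw [Finset.sum_ite_eq' Finset.univ (1 - u ^ 2) (fun x => χ x)]
          simp
  have hbij : Function.Bijective (fun y : ZMod p => 1 - 2 * y) := by
    rw [← Finite.injective_iff_bijective]
    intro a b hab
    simp only at hab
    exact mul_left_cancel₀ (aux_two_ne_zero hp) (by linear_combination -hab)
  have step2 : ∑ u : ZMod p, χ (1 - u ^ 2) = χ 4 * jacobiSum χ χ := by
    calc ∑ u : ZMod p, χ (1 - u ^ 2)
        = ∑ y : ZMod p, χ (1 - (1 - 2 * y) ^ 2) :=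
          (Fintype.sum_bijective _ hbij _ _ fun y => rfl).symm
      _ = ∑ y : ZMod p, χ 4 * (χ y * χ (1 - y)) := by
          refine Finset.sum_congr rfl fun y _ => ?_
          rw [← map_mul, ← map_mul]
          congr 1
          ring
      _ = χ 4 * jacobiSum χ χ := by rw [jacobiSum, Finset.mul_sum]
  rw [step1, step2]

end Aux3

section Aux4

variable {p : ℕ} [Fact p.Prime]

/-- Hasse–Davenport product relation for `m = 2`, nondegenerate case. -/
private lemma aux_HD (hp : Odd p) {χ : MulChar (ZMod p) ℂ} (h1 : χ ≠ 1) (h2 : χ ^ 2 ≠ 1)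
    {ψ : AddChar (ZMod p) ℂ} (hψ : ψ.IsPrimitive) :
    χ 4 * (gaussSum χ ψ
        * gaussSum (χ * ((quadraticChar (ZMod p)).ringHomComp (Int.castRingHom ℂ))) ψ)
      = gaussSum ((quadraticChar (ZMod p)).ringHomComp (Int.castRingHom ℂ)) ψ
        * gaussSum (χ ^ 2) ψ := by
  set φ := (quadraticChar (ZMod p)).ringHomComp (Int.castRingHom ℂ) with hφdef
  have hφ2 : φ ^ 2 = 1 := aux_phi_quadratic.sq_eq_one
  have hχφ : χ * φ ≠ 1 := by
    intro h
    have hc : χ = φ := by rw [eq_inv_of_mul_eq_one_left h, aux_phi_quadratic.inv]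
    exact h2 (by rw [hc]; exact hφ2)
  have hχχ : χ * χ ≠ 1 := by rwa [← sq]
  have hJ1 : gaussSum (χ ^ 2) ψ * jacobiSum χ χ = gaussSum χ ψ * gaussSum χ ψ := by
    have h := jacobiSum_mul_nontrivial hχχ ψ
    rwa [← sq] at h
  have hJ2 : gaussSum (χ * φ) ψ * jacobiSum χ φ = gaussSum χ ψ * gaussSum φ ψ :=
    jacobiSum_mul_nontrivial hχφ ψ
  have hkey : jacobiSum χ φ = χ 4 * jacobiSum χ χ := aux_jacobi_quad hp h1
  have hcard0 : (Fintype.card (ZMod p) : ℂ) ≠ 0 := by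
    rw [ZMod.card]
    exact_mod_cast (Fact.out : p.Prime).ne_zero
  have hg : gaussSum χ ψ ≠ 0 := gaussSum_ne_zero_of_nontrivial hcard0 h1 hψ
  apply mul_left_cancel₀ hg
  linear_combination (-(χ 4 * gaussSum (χ * φ) ψ)) * hJ1 + gaussSum (χ ^ 2) ψ * hJ2
    - (gaussSum (χ ^ 2) ψ * gaussSum (χ * φ) ψ) * hkey

end Aux4

section Aux5

variable {p : ℕ} [Fact p.Prime]

private lemma aux_term (hp : Odd p) (n : ℕ) (hn : 1 ≤ n)
    {ψ : AddChar (ZMod p) ℂ} (hψ : ψ.IsPrimitive) {α : ZMod p} (hα : α ≠ 0)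
    (φ : MulChar (ZMod p) ℂ)
    (hφ : φ = (quadraticChar (ZMod p)).ringHomComp (Int.castRingHom ℂ))
    (χ : MulChar (ZMod p) ℂ) :
    gaussSum (χ ^ (3 * n)) ψ * gaussSum (φ * χ⁻¹) ψ * gaussSum χ⁻¹ ψ
        * gaussSum (χ⁻¹ ^ (3 * n - 2)) ψ * χ α
      = gaussSum φ ψ * ((p : ℂ) * (jacobiSum (χ ^ (3 * n)) (χ⁻¹ ^ (3 * n - 2)) * χ (4 * α)))
        + ((if χ = 1 then -(gaussSum φ ψ * ((p : ℂ) - 1) ^ 2) else 0)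
          + (if χ = φ then -(gaussSum φ ψ * ((p : ℂ) - 1) ^ 2
              * (φ α * (if φ ^ n = 1 then (1 : ℂ) else 0))) else 0)) := by
  have hφ1 : φ ≠ 1 := hφ ▸ aux_phi_ne_one hp
  have hφq : φ.IsQuadratic := hφ ▸ aux_phi_quadratic
  have hφ2 : φ ^ 2 = 1 := hφq.sq_eq_one
  have hφinv : φ⁻¹ = φ := hφq.inv
  have h4 : (4 : ZMod p) ≠ 0 := aux_four_ne_zero hp
  have h4α : (4 : ZMod p) * α ≠ 0 := mul_ne_zero h4 hα
  have hφ4 : φ 4 = 1 := by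
    have h22 : (φ ^ 2) (2 : ZMod p) = 1 := by
      rw [hφ2]; exact MulChar.one_apply (isUnit_iff_ne_zero.mpr (aux_two_ne_zero hp))
    rw [show (4 : ZMod p) = 2 * 2 by norm_num, map_mul]
    rwa [sq, MulChar.coeToFun_mul, Pi.mul_apply] at h22
  by_cases hc1 : χ = 1
  · subst hc1
    rw [one_pow, inv_one, one_pow, mul_one, aux_gaussSum_one hψ, jacobiSum_one_one,
      MulChar.one_apply (isUnit_iff_ne_zero.mpr hα),
      MulChar.one_apply (isUnit_iff_ne_zero.mpr h4α),
      if_pos rfl, if_neg (fun h => hφ1 h.symm), ZMod.card]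
    ring
  · by_cases hc2 : χ = φ
    · subst hc2
      have e1 : χ ^ (3 * n) = χ ^ n := by
        rw [show 3 * n = 2 * n + n by ring, pow_add, pow_mul, hφ2, one_pow, one_mul]
      have e2 : χ ^ (3 * n - 2) = χ ^ n := by
        rw [show 3 * n - 2 = n + 2 * (n - 1) by omega, pow_add, pow_mul, hφ2, one_pow, mul_one]
      rw [hφinv, ← sq, hφ2, e1, e2, map_mul, hφ4, one_mul, if_neg hc1, if_pos rfl]
      by_cases hn1 : χ ^ n = 1
      · rw [hn1, aux_gaussSum_one hψ, jacobiSum_one_one, ZMod.card, if_pos rfl]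
        ring
      · have hnodd : Odd n := by
          rcases Nat.even_or_odd n with he | ho
          · exact absurd (hφq.pow_even he) hn1
          · exact ho
        have hn2 : χ ^ n = χ := hφq.pow_odd hnodd
        have hJφ : jacobiSum χ χ = -χ (-1) := by
          have h := jacobiSum_nontrivial_inv hc1
          rwa [hφinv] at h
        have hsq : gaussSum χ ψ ^ 2 = χ (-1) * (p : ℂ) := by
          have h := gaussSum_sq hc1 hφq hψ
          rwa [ZMod.card] at h
        rw [hn2, aux_gaussSum_one hψ, hJφ, if_neg hc1]
        linear_combination (-(gaussSum χ ψ * χ α)) * hsq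
    · -- generic case
      have h2 : χ ^ 2 ≠ 1 := fun h => hc2 (hφ ▸ aux_sq_classify hp hc1 h)
      have hinv1 : χ⁻¹ ≠ 1 := fun h => hc1 (inv_eq_one.mp h)
      have hinv2 : (χ⁻¹) ^ 2 ≠ 1 := by
        intro h
        apply h2
        rw [← inv_inv (χ ^ 2), ← inv_pow, h, inv_one]
      have hprod : χ ^ (3 * n) * χ⁻¹ ^ (3 * n - 2) = χ ^ 2 := by
        have h3n : χ ^ (3 * n) = χ ^ 2 * χ ^ (3 * n - 2) := by
          rw [← pow_add]; congr 1; omega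
        rw [h3n, inv_pow, mul_assoc, mul_inv_cancel, mul_one]
      have hne : χ ^ (3 * n) * χ⁻¹ ^ (3 * n - 2) ≠ 1 := by rw [hprod]; exact h2
      have hJ := jacobiSum_mul_nontrivial hne ψ
      rw [hprod] at hJ
      have hHD := aux_HD hp hinv1 hinv2 hψ
      rw [inv_pow, ← hφ] at hHD
      have hmc := gaussSum_mul_gaussSum_eq_card h2 hψ
      have hsh := mul_gaussSum_inv_eq_gaussSum ((χ ^ 2)⁻¹) ψ
      have hval : ((χ ^ 2)⁻¹) (-1 : ZMod p) = 1 := by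
        have hneg : ((-1 : ZMod p))⁻¹ = -1 := by
          rw [inv_neg, inv_one]
        rw [MulChar.inv_apply', hneg, sq, MulChar.coeToFun_mul, Pi.mul_apply, ← map_mul,
          neg_mul_neg, one_mul, map_one]
      rw [hval, one_mul] at hsh
      rw [hsh, ZMod.card] at hmc
      have hts : χ 4 * χ⁻¹ 4 = 1 := by
        rw [MulChar.inv_apply', ← map_mul, mul_inv_cancel₀ h4, map_one]
      rw [map_mul, if_neg hc1, if_neg hc2, mul_comm φ χ⁻¹]
      linear_combination (-(gaussSum (χ⁻¹ * φ) ψ * gaussSum χ⁻¹ ψ * χ α)) * hJ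
        + (-(gaussSum (χ⁻¹ * φ) ψ * gaussSum χ⁻¹ ψ * χ α * gaussSum (χ ^ 2) ψ
            * jacobiSum (χ ^ (3 * n)) (χ⁻¹ ^ (3 * n - 2)))) * hts
        + (χ 4 * χ α * jacobiSum (χ ^ (3 * n)) (χ⁻¹ ^ (3 * n - 2)) * gaussSum (χ ^ 2) ψ) * hHD
        + (χ 4 * χ α * jacobiSum (χ ^ (3 * n)) (χ⁻¹ ^ (3 * n - 2)) * gaussSum φ ψ) * hmc

end Aux5

theorem sum_gauss_to_jacobi (p : ℕ) [Fact p.Prime] (hp : Odd p) (n : ℕ) (hn : 1 ≤ n)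
    (hdvd : ¬ (p ∣ 3 * n * (3 * n - 2))) (ζ : ℂ) (hζ : IsPrimitiveRoot ζ p)
    (φ : MulChar (ZMod p) ℂ)
    (hφ : φ = (quadraticChar (ZMod p)).ringHomComp (Int.castRingHom ℂ))
    (α : ZMod p) (hα : α ≠ 0) :
    ∑ χ : MulChar (ZMod p) ℂ,
        gsum p ζ (χ ^ (3 * n)) * gsum p ζ (φ * χ⁻¹) * gsum p ζ χ⁻¹ *
          gsum p ζ (χ⁻¹ ^ (3 * n - 2)) * χ α =
      gsum p ζ φ *
        ((p : ℂ) * (∑ χ : MulChar (ZMod p) ℂ,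
            jacobiSum (χ ^ (3 * n)) (χ⁻¹ ^ (3 * n - 2)) * χ (4 * α)) -
          ((p : ℂ) - 1) ^ 2 * (1 + φ α * (if φ ^ n = 1 then 1 else 0))) := by
  haveI : NeZero p := ⟨(Fact.out : p.Prime).ne_zero⟩
  have hζp : ζ ^ p = 1 := ((IsPrimitiveRoot.iff_def ζ p).mp hζ).1
  set ψ : AddChar (ZMod p) ℂ := AddChar.zmodChar p hζp with hψdef
  have hψ : ψ.IsPrimitive := AddChar.zmodChar_primitive_of_primitive_root p hζ
  have hg : ∀ χ : MulChar (ZMod p) ℂ, gsum p ζ χ = gaussSum χ ψ := by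
    intro χ
    simp only [gsum, gaussSum, hψdef, AddChar.zmodChar_apply]
  simp_rw [hg]
  rw [Finset.sum_congr rfl fun χ _ => aux_term hp n hn hψ hα φ hφ χ,
    Finset.sum_add_distrib, Finset.sum_add_distrib, ← Finset.mul_sum, ← Finset.mul_sum]
  simp only [Finset.sum_ite_eq', Finset.mem_univ, if_true]
  ring
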